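/- Let G be a finite simple 2-edge-connected graph with Mo(G) = 3. Then there exists a positive integer k such that every vertex of G has transmission equal to k or k + 1, and both values are attained. -/

import Mathlib

open SimpleGraph Finset

open scoped Classical in
/-- The number of vertices strictly closer to `u` than to `v`. -/
noncomputable def nCloser {V : Type*} [Fintype V] (G : SimpleGraph V) (u v : V) : ℕ :=
  (Finset.univ.filter (fun w => G.dist w u < G.dist w v)).card

/-- The contribution `|n_u - n_v|` of a pair of vertices. -/
noncomputable def contrib {V : Type*} [Fintype V] (G : SimpleGraph V) (u v : V) : ℕ :=
  ((nCloser G u v : ℤ) - (nCloser G v u : ℤ)).natAbs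

open scoped Classical in
/-- The Mostar index `Mo(G) = Σ_{uv ∈ E(G)} |n_u − n_v|`. -/
noncomputable def mostar {V : Type*} [Fintype V] (G : SimpleGraph V) : ℕ :=
  ∑ e ∈ G.edgeFinset, Sym2.lift
    ⟨fun u v => contrib G u v,
     fun a b => by simp only [contrib]; omega⟩ e

/-- The transmission of a vertex: the sum of its distances to all vertices. -/
noncomputable def transmission {V : Type*} [Fintype V] (G : SimpleGraph V) (v : V) : ℕ :=
  ∑ u : V, G.dist u v

open scoped Classical

/-- For adjacent vertices, the difference of transmissions equals `n_v - n_u`. -/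
lemma transmission_sub_eq {V : Type*} [Fintype V] {G : SimpleGraph V} (hG : G.Connected)
    {u v : V} (h : G.Adj u v) :
    (transmission G u : ℤ) - transmission G v = (nCloser G v u : ℤ) - nCloser G u v := by
  have hd : ∀ w, ((G.dist w u : ℤ)) - G.dist w v =
      (if G.dist w v < G.dist w u then (1 : ℤ) else 0)
        - (if G.dist w u < G.dist w v then (1 : ℤ) else 0) := by
    intro w
    have h1 : G.dist w u ≤ G.dist w v + 1 := by
      have := hG.dist_triangle (u := w) (v := v) (w := u)
      rwa [SimpleGraph.dist_eq_one_iff_adj.mpr h.symm] at this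
    have h2 : G.dist w v ≤ G.dist w u + 1 := by
      have := hG.dist_triangle (u := w) (v := u) (w := v)
      rwa [SimpleGraph.dist_eq_one_iff_adj.mpr h] at this
    split_ifs <;> omega
  have h0 : (transmission G u : ℤ) - transmission G v
      = ∑ w : V, ((G.dist w u : ℤ) - G.dist w v) := by
    rw [transmission, transmission]
    push_cast
    rw [Finset.sum_sub_distrib]
  rw [h0, Finset.sum_congr rfl (fun w _ => hd w), Finset.sum_sub_distrib,
    Finset.sum_boole, Finset.sum_boole, nCloser, nCloser]

/-- `contrib` on an edge equals the absolute difference of transmissions. -/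
lemma contrib_eq_transmission {V : Type*} [Fintype V] {G : SimpleGraph V} (hG : G.Connected)
    {u v : V} (h : G.Adj u v) :
    contrib G u v = ((transmission G u : ℤ) - transmission G v).natAbs := by
  have := transmission_sub_eq hG h
  simp only [contrib]
  omega

/-- The crossing predicate: the edge `e` crosses the threshold `t` of transmissions. -/
def crossT {V : Type*} [Fintype V] (G : SimpleGraph V) (t : ℕ) (e : Sym2 V) : Prop :=
  ∃ u v, e = s(u, v) ∧ transmission G u < t ∧ t ≤ transmission G v

lemma exists_cross_edge {V : Type*} [Fintype V] {G G' : SimpleGraph V} (hle : G' ≤ G)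
    (t : ℕ) {a b : V} (p : G'.Walk a b)
    (ha : transmission G a < t) (hb : t ≤ transmission G b) :
    ∃ e ∈ p.edges, crossT G t e := by
  induction p with
  | nil => omega
  | @cons x y z h q ih =>
    by_cases hc : t ≤ transmission G y
    · exact ⟨s(x, y), by simp, ⟨x, y, rfl, ha, hc⟩⟩
    · obtain ⟨e, he, hce⟩ := ih (by omega) hb
      exact ⟨e, by simp [he], hce⟩

lemma two_le_cut {V : Type*} [Fintype V] {G : SimpleGraph V} (hG : G.Connected)
    (hbr : ∀ e, ¬ G.IsBridge e) (t : ℕ) {a b : V}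
    (ha : transmission G a < t) (hb : t ≤ transmission G b) :
    2 ≤ (G.edgeFinset.filter (crossT G t)).card := by
  obtain ⟨p⟩ := hG a b
  obtain ⟨e1, he1, hc1⟩ := exists_cross_edge le_rfl t p ha hb
  have he1' : e1 ∈ G.edgeSet := p.edges_subset_edgeSet he1
  obtain ⟨u, v, rfl, hu, hv⟩ := hc1
  have hadj : G.Adj u v := he1'
  have hnb := hbr s(u, v)
  rw [SimpleGraph.isBridge_iff_adj_and_forall_walk_mem_edges] at hnb
  push_neg at hnb
  obtain ⟨q, hq⟩ := hnb
  obtain ⟨e2, he2, hc2⟩ := exists_cross_edge le_rfl t q hu hv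
  refine Finset.one_lt_card.mpr ⟨s(u, v), ?_, e2, ?_, ?_⟩
  · exact Finset.mem_filter.mpr ⟨SimpleGraph.mem_edgeFinset.mpr he1', u, v, rfl, hu, hv⟩
  · exact Finset.mem_filter.mpr
      ⟨SimpleGraph.mem_edgeFinset.mpr (q.edges_subset_edgeSet he2), hc2⟩
  · intro hcontra
    exact hq (hcontra ▸ he2)

theorem mostar_eq_three_transmissions {V : Type*} [Fintype V] (G : SimpleGraph V)
    (hG : G.Connected) (hbr : ∀ e, ¬ G.IsBridge e) (hMo : mostar G = 3) :
    ∃ k : ℕ, 0 < k ∧ (∀ v : V, transmission G v = k ∨ transmission G v = k + 1) ∧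
      (∃ v : V, transmission G v = k) ∧ (∃ v : V, transmission G v = k + 1) := by
  classical
  set ef : Sym2 V → ℕ := Sym2.lift
    ⟨fun u v => ((transmission G u : ℤ) - transmission G v).natAbs,
     fun a b => by simp only; omega⟩ with hef
  have hsum : mostar G = ∑ e ∈ G.edgeFinset, ef e := by
    rw [mostar]
    refine Finset.sum_congr rfl fun e he => ?_
    revert he
    induction e using Sym2.ind with
    | _ u v =>
      intro he
      have hadj : G.Adj u v := by rwa [mem_edgeFinset, mem_edgeSet] at he
      simp only [Sym2.lift_mk, hef]
      exact contrib_eq_transmission hG hadj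
  -- minimum transmission
  have hVne : Nonempty V := hG.nonempty
  obtain ⟨b, -, hmin⟩ := Finset.exists_min_image Finset.univ (transmission G)
    ⟨Classical.arbitrary V, Finset.mem_univ _⟩
  set m := transmission G b with hm
  -- range bound
  have hbound : ∀ v : V, transmission G v ≤ m + 1 := by
    by_contra hbig
    push_neg at hbig
    obtain ⟨c, hc⟩ := hbig
    have hA : 2 ≤ (G.edgeFinset.filter (crossT G (m + 1))).card :=
      two_le_cut hG hbr (m + 1) (a := b) (b := c) (by omega) (by omega)
    have hB : 2 ≤ (G.edgeFinset.filter (crossT G (m + 2))).card :=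
      two_le_cut hG hbr (m + 2) (a := b) (b := c) (by omega) (by omega)
    have hge : (G.edgeFinset.filter (crossT G (m + 1))).card
        + (G.edgeFinset.filter (crossT G (m + 2))).card ≤ ∑ e ∈ G.edgeFinset, ef e := by
      rw [Finset.card_filter, Finset.card_filter, ← Finset.sum_add_distrib]
      refine Finset.sum_le_sum fun e he => ?_
      induction e using Sym2.ind with
      | _ u v =>
        simp only [Sym2.lift_mk, hef]
        have key : ∀ t : ℕ, crossT G t s(u, v) →
            (transmission G u < t ∧ t ≤ transmission G v) ∨
            (transmission G v < t ∧ t ≤ transmission G u) := by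
          rintro t ⟨x, y, hxy, h1, h2⟩
          rw [Sym2.eq_iff] at hxy
          rcases hxy with ⟨rfl, rfl⟩ | ⟨rfl, rfl⟩
          · exact Or.inl ⟨h1, h2⟩
          · exact Or.inr ⟨h1, h2⟩
        split_ifs with hc1 hc2 hc2
        · rcases key _ hc1 with ⟨k1, k2⟩ | ⟨k1, k2⟩ <;>
            rcases key _ hc2 with ⟨k3, k4⟩ | ⟨k3, k4⟩ <;> omega
        · rcases key _ hc1 with ⟨k1, k2⟩ | ⟨k1, k2⟩ <;> omega
        · rcases key _ hc2 with ⟨k1, k2⟩ | ⟨k1, k2⟩ <;> omega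
        · omega
    omega
  have hdi : ∀ v : V, transmission G v = m ∨ transmission G v = m + 1 := by
    intro v
    have := hmin v (Finset.mem_univ v)
    have := hbound v
    omega
  -- there is an edge with different transmissions
  have hne : ∃ u v : V, G.Adj u v ∧ transmission G u ≠ transmission G v := by
    by_contra hno
    push_neg at hno
    have hz : mostar G = 0 := by
      rw [hsum]
      refine Finset.sum_eq_zero fun e he => ?_
      revert he
      induction e using Sym2.ind with
      | _ u v =>
        intro he
        have hadj : G.Adj u v := by rwa [mem_edgeFinset, mem_edgeSet] at he
        have := hno u v hadj
        simp only [Sym2.lift_mk, hef]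
        omega
    omega
  obtain ⟨u, v, hadj, hneq⟩ := hne
  -- positivity of m
  have hmpos : 0 < m := by
    have hx : ∃ x : V, x ≠ b := by
      by_cases hub : u = b
      · exact ⟨v, fun hvb => hadj.ne (hub.trans hvb.symm)⟩
      · exact ⟨u, hub⟩
    obtain ⟨x, hx⟩ := hx
    have h1 : 0 < G.dist x b := hG.pos_dist_of_ne hx
    have h2 : G.dist x b ≤ transmission G b :=
      Finset.single_le_sum (f := fun w => G.dist w b) (fun i _ => Nat.zero_le _)
        (Finset.mem_univ x)
    omega
  refine ⟨m, hmpos, hdi, ⟨b, rfl⟩, ?_⟩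
  rcases hdi u with h | h <;> rcases hdi v with h' | h'
  · omega
  · exact ⟨v, h'⟩
  · exact ⟨u, h⟩
  · omega
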